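/- Let A be an n×n nonsingular M-matrix, written A = D_A − B with D_A = diag(a_1,…,a_n) and B ≥ 0 with zero diagonal, and let A_sym = D_A − S(B), where S(B) has entries (b_{i,j} b_{j,i})^{1/2}. Then A_sym and Ā_sym = D_A^{-1}A_sym are nonsingular M-matrices, and det(A_sym) ≥ det(A) and det(Ā_sym) ≥ det(Ā). -/

import Mathlib

open MeasureTheory ProbabilityTheory Matrix

noncomputable section

/-- Number of cycles of a permutation, counting fixed points as cycles. -/
def numCycles {β : Type*} [Fintype β] [DecidableEq β] (π : Equiv.Perm β) : ℕ :=
  π.cycleType.card + (Finset.univ.filter fun i => π i = i).card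

/-- The `α`-permanent `|M|_α = Σ_π α^{c(π)} Π_i M_{i,π(i)}`. -/
def aperm {β : Type*} [Fintype β] [DecidableEq β] (α : ℝ) (M : Matrix β β ℝ) : ℝ :=
  ∑ π : Equiv.Perm β, α ^ numCycles π * ∏ i, M i (π i)

/-- The `α`-permanent `|C(k)|_α` of the `|k| × |k|` matrix `C(k)` whose entry at `(p,q)`
is `C i_p i_q`, where row/column indices are grouped into blocks of sizes `k 1, …, k n`.
We index the rows and columns by the type `Σ i, Fin (k i)`; since the `α`-permanent is
invariant under simultaneous relabeling of rows and columns, this is the same number. -/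
def apermK {n : ℕ} (α : ℝ) (C : Matrix (Fin n) (Fin n) ℝ) (k : Fin n → ℕ) : ℝ :=
  aperm α (Matrix.of fun p q : Σ i : Fin n, Fin (k i) => C p.1 q.1)

/-- A nonsingular M-matrix: nonpositive off-diagonal entries, invertible,
with entrywise nonnegative inverse. -/
def IsNonsingMMatrix {n : ℕ} (A : Matrix (Fin n) (Fin n) ℝ) : Prop :=
  (∀ i j, i ≠ j → A i j ≤ 0) ∧ IsUnit A.det ∧ ∀ i j, 0 ≤ A⁻¹ i j

/-- `Ā = D_A⁻¹ A`. -/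
def Abar {n : ℕ} (A : Matrix (Fin n) (Fin n) ℝ) : Matrix (Fin n) (Fin n) ℝ :=
  Matrix.of fun i j => A i j / A i i

/-- `B̄ = D_A⁻¹ B`, where `A = D_A - B` with `B ≥ 0` having zero diagonal. -/
def Bbar {n : ℕ} (A : Matrix (Fin n) (Fin n) ℝ) : Matrix (Fin n) (Fin n) ℝ :=
  Matrix.of fun i j => if i = j then 0 else -(A i j) / A i i

/-- The probability mass function of `Z_{α,B̄}`:
`P(Z = k) = det(Ā)^α |B̄(k)|_α / Π_i k_i!`. -/
def Zpmf {n : ℕ} (α : ℝ) (A : Matrix (Fin n) (Fin n) ℝ) (k : Fin n → ℕ) : ℝ :=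
  (Abar A).det ^ α * apermK α (Bbar A) k / ∏ i, (Nat.factorial (k i) : ℝ)

/-- `X` is an `α`-permanental random vector with kernel `R`:
`E(e^{-Σ s_i X_i}) = det(I + R S)^{-α}` for all `s ≥ 0`, `S = diag(s)`. -/
def IsPermanental {n : ℕ} {Ω : Type*} [MeasurableSpace Ω] (μ : Measure Ω)
    (α : ℝ) (R : Matrix (Fin n) (Fin n) ℝ) (X : Ω → Fin n → ℝ) : Prop :=
  Measurable X ∧ (∀ ω i, 0 ≤ X ω i) ∧
    ∀ s : Fin n → ℝ, (∀ i, 0 ≤ s i) →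
      ∫ ω, Real.exp (-∑ i, s i * X ω i) ∂μ = ((1 + R * Matrix.diagonal s).det) ^ (-α)

end

noncomputable section

/-- `A_sym = D_A - S(B)`: same diagonal as `A`, and off-diagonal entries
`-(b_{i,j} b_{j,i})^{1/2} = -√(A i j * A j i)` (since `b_{i,j} = -A i j` for `i ≠ j`). -/
def Asym {n : ℕ} (A : Matrix (Fin n) (Fin n) ℝ) : Matrix (Fin n) (Fin n) ℝ :=
  Matrix.of fun i j => if i = j then A i j else -Real.sqrt (A i j * A j i)

end

noncomputable section
namespace Stmt15Aux

/-- Auxiliary predicate: a real Z-matrix together with a positive vector `x`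
with `A x > 0` entrywise. -/
def Good {n : ℕ} (A : Matrix (Fin n) (Fin n) ℝ) (x : Fin n → ℝ) : Prop :=
  (∀ i j, i ≠ j → A i j ≤ 0) ∧ (∀ i, 0 < x i) ∧ (∀ i, 0 < (A *ᵥ x) i)

variable {n : ℕ}

lemma asym_diag (A : Matrix (Fin n) (Fin n) ℝ) (i : Fin n) : Asym A i i = A i i :=
  if_pos rfl

lemma asym_off (A : Matrix (Fin n) (Fin n) ℝ) {i j : Fin n} (hij : i ≠ j) :
    Asym A i j = -Real.sqrt (A i j * A j i) :=
  if_neg hij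

lemma good_mulVec_nonneg {A : Matrix (Fin n) (Fin n) ℝ} {x : Fin n → ℝ}
    (h : Good A x) {y : Fin n → ℝ} (hy : ∀ i, 0 ≤ (A *ᵥ y) i) : ∀ i, 0 ≤ y i := by
  obtain ⟨hz, hx, hAx⟩ := h
  by_contra hcon
  push_neg at hcon
  obtain ⟨i1, hi1⟩ := hcon
  obtain ⟨i0, -, hi0⟩ := Finset.exists_min_image Finset.univ (fun i => y i / x i)
    ⟨i1, Finset.mem_univ i1⟩
  set c := y i0 / x i0 with hcdef
  have hc0 : c < 0 :=
    lt_of_le_of_lt (hi0 i1 (Finset.mem_univ i1)) (div_neg_of_neg_of_pos hi1 (hx i1))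
  set z : Fin n → ℝ := fun k => y k - c * x k with hzdef
  have hznn : ∀ k, 0 ≤ z k := by
    intro k
    have h1 : c * x k ≤ y k := (le_div_iff₀ (hx k)).1 (hi0 k (Finset.mem_univ k))
    simp only [hzdef]; linarith
  have hzi0 : z i0 = 0 := by
    have hne : x i0 ≠ 0 := ne_of_gt (hx i0)
    simp only [hzdef, hcdef]
    field_simp
    ring
  have key1 : 0 < (A *ᵥ z) i0 := by
    have hsub : A *ᵥ z = A *ᵥ y - c • (A *ᵥ x) := by
      have : z = y - c • x := by
        funext k
        simp only [hzdef, Pi.sub_apply, Pi.smul_apply, smul_eq_mul]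
      rw [this, Matrix.mulVec_sub, Matrix.mulVec_smul]
    rw [hsub]
    have := hAx i0
    have := hy i0
    simp only [Pi.sub_apply, Pi.smul_apply, smul_eq_mul]
    nlinarith
  have key2 : (A *ᵥ z) i0 ≤ 0 := by
    rw [Matrix.mulVec, dotProduct]
    apply Finset.sum_nonpos
    intro k _
    by_cases hk : k = i0
    · subst hk; rw [hzi0]; simp
    · exact mul_nonpos_of_nonpos_of_nonneg (hz i0 k (Ne.symm hk)) (hznn k)
  linarith

lemma good_det_ne_zero {A : Matrix (Fin n) (Fin n) ℝ} {x : Fin n → ℝ}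
    (h : Good A x) : A.det ≠ 0 := by
  intro hdet
  obtain ⟨v, hv, hAv⟩ := (Matrix.exists_mulVec_eq_zero_iff).2 hdet
  have h1 : ∀ i, 0 ≤ v i := good_mulVec_nonneg h (fun i => by rw [hAv]; simp)
  have h2 : ∀ i, 0 ≤ -v i := by
    apply good_mulVec_nonneg h (y := -v)
    intro i
    rw [Matrix.mulVec_neg, hAv]
    simp
  refine hv (funext fun i => ?_)
  have h2i := h2 i
  have h1i := h1 i
  simp only [Pi.zero_apply]
  linarith

lemma good_diag_pos {A : Matrix (Fin n) (Fin n) ℝ} {x : Fin n → ℝ}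
    (h : Good A x) (i : Fin n) : 0 < A i i := by
  obtain ⟨hz, hx, hAx⟩ := h
  have h1 : (A *ᵥ x) i ≤ A i i * x i := by
    rw [Matrix.mulVec, dotProduct]
    rw [← Finset.sum_erase_add _ _ (Finset.mem_univ i)]
    have : ∑ j ∈ Finset.univ.erase i, A i j * x j ≤ 0 := by
      apply Finset.sum_nonpos
      intro j hj
      exact mul_nonpos_of_nonpos_of_nonneg (hz i j (Ne.symm (Finset.mem_erase.1 hj).1))
        (hx j).le
    linarith
  have := hAx i
  have hxi := hx i
  nlinarith

lemma good_det_pos {A : Matrix (Fin n) (Fin n) ℝ} {x : Fin n → ℝ}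
    (h : Good A x) : 0 < A.det := by
  have hdiag := good_diag_pos h
  obtain ⟨hz, hx, hAx⟩ := h
  set D : Matrix (Fin n) (Fin n) ℝ := Matrix.diagonal (fun i => A i i) with hD
  set F : ℝ → ℝ := fun t => (t • A + (1 - t) • D).det with hF
  have hgood : ∀ t ∈ Set.Icc (0:ℝ) 1, Good (t • A + (1 - t) • D) x := by
    rintro t ⟨ht0, ht1⟩
    refine ⟨?_, hx, ?_⟩
    · intro i j hij
      have : D i j = 0 := Matrix.diagonal_apply_ne _ hij
      simp only [Matrix.add_apply, Matrix.smul_apply, this, smul_eq_mul, mul_zero, add_zero]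
      exact mul_nonpos_of_nonneg_of_nonpos ht0 (hz i j hij)
    · intro i
      rw [Matrix.add_mulVec, Matrix.smul_mulVec, Matrix.smul_mulVec]
      have hDx : (D *ᵥ x) i = A i i * x i := by
        simp [hD, Matrix.mulVec_diagonal]
      simp only [Pi.add_apply, Pi.smul_apply, smul_eq_mul, hDx]
      have h1 := hAx i
      have h2 := mul_pos (hdiag i) (hx i)
      rcases eq_or_lt_of_le ht0 with ht | ht
      · rw [← ht]; simpa using h2
      · have := mul_pos ht h1
        have := mul_nonneg (by linarith : (0:ℝ) ≤ 1 - t) h2.le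
        linarith
  have hne : ∀ t ∈ Set.Icc (0:ℝ) 1, F t ≠ 0 := fun t ht => good_det_ne_zero (hgood t ht)
  have hcont : Continuous F := by
    apply Continuous.matrix_det
    apply Continuous.add
    · exact (continuous_id.smul continuous_const)
    · exact ((continuous_const.sub continuous_id).smul continuous_const)
  have hF0 : 0 < F 0 := by
    have : F 0 = ∏ i, A i i := by
      simp [hF, hD, Matrix.det_diagonal]
    rw [this]
    exact Finset.prod_pos fun i _ => hdiag i
  have hF1 : F 1 = A.det := by simp [hF]
  rw [← hF1]
  rcases lt_trichotomy (F 1) 0 with hlt | heq | hgt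
  · exfalso
    have hsub : Set.Icc (F 1) (F 0) ⊆ F '' Set.Icc 0 1 :=
      intermediate_value_Icc' zero_le_one hcont.continuousOn
    obtain ⟨t, ht, hFt⟩ := hsub ⟨hlt.le, hF0.le⟩
    exact hne t ht hFt
  · exact absurd heq (hne 1 ⟨zero_le_one, le_refl 1⟩)
  · exact hgt

lemma good_isNonsingM {A : Matrix (Fin n) (Fin n) ℝ} {x : Fin n → ℝ}
    (h : Good A x) : IsNonsingMMatrix A ∧ 0 < A.det := by
  have hdet := good_det_pos h
  have hunit : IsUnit A.det := isUnit_iff_ne_zero.2 (ne_of_gt hdet)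
  refine ⟨⟨h.1, hunit, ?_⟩, hdet⟩
  intro i j
  have hcol : ∀ i', 0 ≤ A⁻¹ i' j := by
    apply good_mulVec_nonneg h (y := fun i' => A⁻¹ i' j)
    intro k
    have heq : (A *ᵥ fun i' => A⁻¹ i' j) k = (A * A⁻¹) k j := by
      simp [Matrix.mulVec, Matrix.mul_apply, dotProduct]
    rw [heq, Matrix.mul_nonsing_inv _ hunit]
    by_cases hkj : k = j <;> simp [Matrix.one_apply, hkj]
  exact hcol i

lemma m_good {A : Matrix (Fin n) (Fin n) ℝ} (hA : IsNonsingMMatrix A) :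
    ∃ x, Good A x ∧ A *ᵥ x = fun _ => 1 := by
  obtain ⟨hz, hunit, hinv⟩ := hA
  set x : Fin n → ℝ := A⁻¹ *ᵥ (fun _ => 1) with hxdef
  have hAx : A *ᵥ x = fun _ => 1 := by
    rw [hxdef, Matrix.mulVec_mulVec, Matrix.mul_nonsing_inv _ hunit, Matrix.one_mulVec]
  have hxapp : ∀ i, x i = ∑ j, A⁻¹ i j * 1 := fun i => rfl
  have hxnn : ∀ i, 0 ≤ x i := by
    intro i
    rw [hxapp]
    exact Finset.sum_nonneg fun j _ => mul_nonneg (hinv i j) zero_le_one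
  have hxpos : ∀ i, 0 < x i := by
    intro i
    rcases (hxnn i).lt_or_eq with hlt | heqz
    · exact hlt
    exfalso
    have hall : ∀ j ∈ Finset.univ, A⁻¹ i j * (1:ℝ) = 0 := by
      rw [← Finset.sum_eq_zero_iff_of_nonneg (fun j _ => mul_nonneg (hinv i j) zero_le_one)]
      rw [← hxapp]
      exact heqz.symm
    have h1 : (A⁻¹ * A) i i = 1 := by
      rw [Matrix.nonsing_inv_mul _ hunit]; simp
    rw [Matrix.mul_apply] at h1
    have : ∑ j, A⁻¹ i j * A j i = 0 := by
      apply Finset.sum_eq_zero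
      intro j hj
      have := hall j hj
      simp only [mul_one] at this
      rw [this, zero_mul]
    rw [this] at h1
    norm_num at h1
  refine ⟨x, ⟨hz, hxpos, ?_⟩, hAx⟩
  intro i
  rw [hAx]
  norm_num

lemma m_transpose {A : Matrix (Fin n) (Fin n) ℝ} (hA : IsNonsingMMatrix A) :
    IsNonsingMMatrix Aᵀ := by
  obtain ⟨hz, hunit, hinv⟩ := hA
  refine ⟨fun i j hij => hz j i (Ne.symm hij), by rwa [Matrix.det_transpose], ?_⟩
  intro i j
  rw [← Matrix.transpose_nonsing_inv]
  exact hinv j i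

lemma sqrt_cs {ι : Type*} (s : Finset ι) (f g : ι → ℝ)
    (hf : ∀ i ∈ s, 0 ≤ f i) (hg : ∀ i ∈ s, 0 ≤ g i) :
    ∑ i ∈ s, Real.sqrt (f i * g i) ≤ Real.sqrt (∑ i ∈ s, f i) * Real.sqrt (∑ i ∈ s, g i) := by
  have h1 : (∑ i ∈ s, Real.sqrt (f i * g i)) ^ 2 ≤ (∑ i ∈ s, f i) * ∑ i ∈ s, g i := by
    apply Finset.sum_sq_le_sum_mul_sum_of_sq_eq_mul s hf hg
    intro i hi
    exact Real.sq_sqrt (mul_nonneg (hf i hi) (hg i hi))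
  have h2 : 0 ≤ ∑ i ∈ s, Real.sqrt (f i * g i) :=
    Finset.sum_nonneg fun i _ => Real.sqrt_nonneg _
  calc ∑ i ∈ s, Real.sqrt (f i * g i)
      = Real.sqrt ((∑ i ∈ s, Real.sqrt (f i * g i)) ^ 2) := (Real.sqrt_sq h2).symm
    _ ≤ Real.sqrt ((∑ i ∈ s, f i) * ∑ i ∈ s, g i) := Real.sqrt_le_sqrt h1
    _ = Real.sqrt (∑ i ∈ s, f i) * Real.sqrt (∑ i ∈ s, g i) :=
        Real.sqrt_mul (Finset.sum_nonneg hf) _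

lemma asym_good {A : Matrix (Fin n) (Fin n) ℝ} (hA : IsNonsingMMatrix A) :
    ∃ z, Good (Asym A) z := by
  obtain ⟨x, hgx, hAx⟩ := m_good hA
  obtain ⟨y, hgy, hAy⟩ := m_good (m_transpose hA)
  have hdiag := good_diag_pos hgx
  set z : Fin n → ℝ := fun i => Real.sqrt (x i * y i) with hzdef
  have hzpos : ∀ i, 0 < z i := fun i => Real.sqrt_pos.2 (mul_pos (hgx.2.1 i) (hgy.2.1 i))
  refine ⟨z, ⟨?_, hzpos, ?_⟩⟩
  · intro i j hij
    simp only [Asym, Matrix.of_apply, if_neg hij]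
    exact neg_nonpos.2 (Real.sqrt_nonneg _)
  intro i
  have hsplit : ((Asym A) *ᵥ z) i
      = ∑ j ∈ Finset.univ.erase i, (Asym A) i j * z j + A i i * z i := by
    rw [Matrix.mulVec, dotProduct, ← Finset.sum_erase_add _ _ (Finset.mem_univ i)]
    simp [Asym]
  rw [hsplit]
  -- bound the off-diagonal sum
  have hterm : ∀ j ∈ Finset.univ.erase i,
      -((Asym A) i j * z j) = Real.sqrt (((-A i j) * x j) * ((-A j i) * y j)) := by
    intro j hj
    have hij : i ≠ j := Ne.symm (Finset.mem_erase.1 hj).1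
    simp only [Asym, Matrix.of_apply, if_neg hij, hzdef]
    rw [neg_mul, neg_neg, ← Real.sqrt_mul (by nlinarith [hgx.1 i j hij, hgx.1 j i (Ne.symm hij)] : (0:ℝ) ≤ A i j * A j i)]
    congr 1
    ring
  have hbound : ∑ j ∈ Finset.univ.erase i, -((Asym A) i j * z j)
      ≤ Real.sqrt (∑ j ∈ Finset.univ.erase i, (-A i j) * x j)
        * Real.sqrt (∑ j ∈ Finset.univ.erase i, (-A j i) * y j) := by
    rw [Finset.sum_congr rfl hterm]
    apply sqrt_cs
    · intro j hj
      have hij : i ≠ j := Ne.symm (Finset.mem_erase.1 hj).1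
      exact mul_nonneg (neg_nonneg.2 (hgx.1 i j hij)) (hgx.2.1 j).le
    · intro j hj
      have hij : i ≠ j := Ne.symm (Finset.mem_erase.1 hj).1
      exact mul_nonneg (neg_nonneg.2 (hgx.1 j i (Ne.symm hij))) (hgy.2.1 j).le
  have hsum1 : ∑ j ∈ Finset.univ.erase i, (-A i j) * x j = A i i * x i - 1 := by
    have h1 : (A *ᵥ x) i = 1 := by rw [hAx]
    rw [Matrix.mulVec, dotProduct, ← Finset.sum_erase_add _ _ (Finset.mem_univ i)] at h1
    have : ∑ j ∈ Finset.univ.erase i, (-A i j) * x j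
        = -∑ j ∈ Finset.univ.erase i, A i j * x j := by
      rw [← Finset.sum_neg_distrib]
      apply Finset.sum_congr rfl
      intros; ring
    rw [this]; linarith
  have hsum2 : ∑ j ∈ Finset.univ.erase i, (-A j i) * y j = A i i * y i - 1 := by
    have h1 : (Aᵀ *ᵥ y) i = 1 := by rw [hAy]
    rw [Matrix.mulVec, dotProduct, ← Finset.sum_erase_add _ _ (Finset.mem_univ i)] at h1
    have : ∑ j ∈ Finset.univ.erase i, (-A j i) * y j
        = -∑ j ∈ Finset.univ.erase i, Aᵀ i j * y j := by
      rw [← Finset.sum_neg_distrib]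
      apply Finset.sum_congr rfl
      intros; simp only [Matrix.transpose_apply]; ring
    rw [this]
    simp only [Matrix.transpose_apply] at h1 ⊢
    linarith
  have hP : (0:ℝ) ≤ A i i * x i - 1 := by
    rw [← hsum1]
    apply Finset.sum_nonneg
    intro j hj
    have hij : i ≠ j := Ne.symm (Finset.mem_erase.1 hj).1
    exact mul_nonneg (neg_nonneg.2 (hgx.1 i j hij)) (hgx.2.1 j).le
  have hQ : (0:ℝ) ≤ A i i * y i - 1 := by
    rw [← hsum2]
    apply Finset.sum_nonneg
    intro j hj
    have hij : i ≠ j := Ne.symm (Finset.mem_erase.1 hj).1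
    exact mul_nonneg (neg_nonneg.2 (hgx.1 j i (Ne.symm hij))) (hgy.2.1 j).le
  have hstrict : Real.sqrt (A i i * x i - 1) * Real.sqrt (A i i * y i - 1) < A i i * z i := by
    have hax : 0 < A i i * x i := mul_pos (hdiag i) (hgx.2.1 i)
    have hay : 0 < A i i * y i := mul_pos (hdiag i) (hgy.2.1 i)
    have hPQ : (A i i * x i - 1) * (A i i * y i - 1) < (A i i * x i) * (A i i * y i) := by
      nlinarith
    have h1 : Real.sqrt (A i i * x i - 1) * Real.sqrt (A i i * y i - 1)
        = Real.sqrt ((A i i * x i - 1) * (A i i * y i - 1)) := (Real.sqrt_mul hP _).symm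
    have h2 : Real.sqrt ((A i i * x i - 1) * (A i i * y i - 1))
        < Real.sqrt ((A i i * x i) * (A i i * y i)) := by
      apply Real.sqrt_lt_sqrt (mul_nonneg hP hQ) hPQ
    have h3 : Real.sqrt ((A i i * x i) * (A i i * y i)) = A i i * z i := by
      rw [hzdef]
      rw [show (A i i * x i) * (A i i * y i) = (A i i)^2 * (x i * y i) by ring]
      rw [Real.sqrt_mul (sq_nonneg _), Real.sqrt_sq (hdiag i).le]
    rw [h1]
    rw [h3] at h2
    exact h2
  have hfinal : -∑ j ∈ Finset.univ.erase i, (Asym A) i j * z j < A i i * z i := by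
    calc -∑ j ∈ Finset.univ.erase i, (Asym A) i j * z j
        = ∑ j ∈ Finset.univ.erase i, -((Asym A) i j * z j) := by
          rw [Finset.sum_neg_distrib]
      _ ≤ Real.sqrt (∑ j ∈ Finset.univ.erase i, (-A i j) * x j)
          * Real.sqrt (∑ j ∈ Finset.univ.erase i, (-A j i) * y j) := hbound
      _ = Real.sqrt (A i i * x i - 1) * Real.sqrt (A i i * y i - 1) := by rw [hsum1, hsum2]
      _ < A i i * z i := hstrict
  linarith

lemma good_abar {M : Matrix (Fin n) (Fin n) ℝ} {z : Fin n → ℝ} (h : Good M z) :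
    Good (Abar M) z := by
  have hd := good_diag_pos h
  obtain ⟨hz, hzpos, hMz⟩ := h
  refine ⟨fun i j hij => div_nonpos_of_nonpos_of_nonneg (hz i j hij) (hd i).le, hzpos, ?_⟩
  intro i
  have heq : (Abar M *ᵥ z) i = (M *ᵥ z) i / M i i := by
    rw [Matrix.mulVec, Matrix.mulVec, dotProduct, dotProduct, Finset.sum_div]
    apply Finset.sum_congr rfl
    intros j _
    simp only [Abar, Matrix.of_apply]
    ring
  rw [heq]
  exact div_pos (hMz i) (hd i)

lemma det_abar (M : Matrix (Fin n) (Fin n) ℝ) :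
    (Abar M).det = (∏ i, (M i i)⁻¹) * M.det := by
  have heq : Abar M = Matrix.diagonal (fun i => (M i i)⁻¹) * M := by
    ext i j
    rw [Matrix.diagonal_mul]
    simp only [Abar, Matrix.of_apply]
    rw [div_eq_inv_mul]
  rw [heq, Matrix.det_mul, Matrix.det_diagonal]

lemma adjugate_nonneg {A : Matrix (Fin n) (Fin n) ℝ} {x : Fin n → ℝ} (h : Good A x) :
    ∀ i j, 0 ≤ A.adjugate i j := by
  obtain ⟨⟨-, hunit, hinv⟩, hdet⟩ := good_isNonsingM h
  intro i j
  have heq : A⁻¹ i j = (A.det)⁻¹ * A.adjugate i j := by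
    rw [Matrix.inv_def]
    simp [Ring.inverse_eq_inv']
  have h2 := hinv i j
  rw [heq] at h2
  have hdd : A.det * (A.det)⁻¹ = 1 := mul_inv_cancel₀ (ne_of_gt hdet)
  nlinarith [mul_nonneg hdet.le h2]

lemma det_mono {P Q : Matrix (Fin n) (Fin n) ℝ} {x : Fin n → ℝ} (hP : Good P x)
    (hQz : ∀ i j, i ≠ j → Q i j ≤ 0) (hPQ : ∀ i j, P i j ≤ Q i j) : P.det ≤ Q.det := by
  classical
  set Ms : Finset (Fin n × Fin n) → Matrix (Fin n) (Fin n) ℝ :=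
    fun s => Matrix.of fun i j => if (i, j) ∈ s then Q i j else P i j with hMs
  have hgood : ∀ s, Good (Ms s) x := by
    intro s
    refine ⟨?_, hP.2.1, ?_⟩
    · intro i j hij
      simp only [hMs, Matrix.of_apply]
      split
      · exact hQz i j hij
      · exact hP.1 i j hij
    · intro i
      have hle : (P *ᵥ x) i ≤ (Ms s *ᵥ x) i := by
        rw [Matrix.mulVec, Matrix.mulVec, dotProduct, dotProduct]
        apply Finset.sum_le_sum
        intro j _
        refine mul_le_mul_of_nonneg_right ?_ (hP.2.1 j).le
        simp only [hMs, Matrix.of_apply]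
        split
        · exact hPQ i j
        · exact le_refl _
      exact lt_of_lt_of_le (hP.2.2 i) hle
  have key : ∀ s : Finset (Fin n × Fin n), P.det ≤ (Ms s).det := by
    intro s
    induction s using Finset.induction_on with
    | empty =>
      have : Ms ∅ = P := by
        ext i j
        show (if (i, j) ∈ (∅ : Finset (Fin n × Fin n)) then Q i j else P i j) = P i j
        simp
      rw [this]
    | @insert p s hns ih =>
      obtain ⟨i, j⟩ := p
      set X := Ms s with hX
      set t : ℝ := Q i j - P i j with ht
      have heq : Ms (insert (i, j) s) = X.updateRow i (X i + t • (Pi.single j (1:ℝ) : Fin n → ℝ)) := by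
        ext a b
        by_cases hai : a = i
        · subst hai
          rw [Matrix.updateRow_self]
          simp only [Pi.add_apply, Pi.smul_apply, smul_eq_mul]
          by_cases hbj : b = j
          · subst hbj
            have hmem : (a, b) ∈ insert (a, b) s := Finset.mem_insert_self _ _
            simp only [hMs, Matrix.of_apply, if_pos hmem, hX, ht, Pi.single_eq_same,
              mul_one, if_neg hns]
            ring
          · have : (Pi.single j (1:ℝ) : Fin n → ℝ) b = 0 := by simp [Pi.single_eq_of_ne hbj]
            rw [this, mul_zero, add_zero]
            have hne : ((a, b) : Fin n × Fin n) ≠ (a, j) := by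
              simp [Prod.ext_iff, hbj]
            simp only [hMs, Matrix.of_apply, hX, Finset.mem_insert, hne, false_or]
        · rw [Matrix.updateRow_ne hai]
          have hne : ((a, b) : Fin n × Fin n) ≠ (i, j) := by
            simp [Prod.ext_iff, hai]
          simp only [hMs, Matrix.of_apply, hX, Finset.mem_insert, hne, false_or]
      have hdet : (Ms (insert (i, j) s)).det = X.det + t * X.adjugate j i := by
        rw [heq, Matrix.det_updateRow_add, Matrix.det_updateRow_smul,
          Matrix.updateRow_eq_self, ← Matrix.adjugate_apply]
      rw [hdet]
      have h1 : 0 ≤ t := sub_nonneg.2 (hPQ i j)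
      have h2 : 0 ≤ X.adjugate j i := adjugate_nonneg (hgood s) j i
      nlinarith [ih]
  have hQeq : Q = Ms Finset.univ := by
    ext i j
    simp [hMs]
  rw [hQeq]
  exact key Finset.univ

lemma sqrt_add_le (u v p q : ℝ) (hu : 0 ≤ u) (hv : 0 ≤ v) (hp : 0 ≤ p) (hq : 0 ≤ q) :
    Real.sqrt (u * v) + Real.sqrt (p * q) ≤ Real.sqrt ((u + p) * (v + q)) := by
  have h1 : Real.sqrt (u*v) * Real.sqrt (p*q) = Real.sqrt (u*q) * Real.sqrt (p*v) := by
    rw [← Real.sqrt_mul (mul_nonneg hu hv), ← Real.sqrt_mul (mul_nonneg hu hq)]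
    congr 1
    ring
  have hcross : 2 * (Real.sqrt (u*v) * Real.sqrt (p*q)) ≤ u*q + p*v := by
    rw [h1]
    nlinarith [Real.sq_sqrt (mul_nonneg hu hq), Real.sq_sqrt (mul_nonneg hp hv),
      sq_nonneg (Real.sqrt (u*q) - Real.sqrt (p*v))]
  have hsq : (Real.sqrt (u*v) + Real.sqrt (p*q))^2 ≤ (u+p)*(v+q) := by
    have e1 := Real.sq_sqrt (mul_nonneg hu hv)
    have e2 := Real.sq_sqrt (mul_nonneg hp hq)
    nlinarith [hcross]
  calc Real.sqrt (u*v) + Real.sqrt (p*q)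
      = Real.sqrt ((Real.sqrt (u*v) + Real.sqrt (p*q))^2) :=
        (Real.sqrt_sq (by positivity)).symm
    _ ≤ Real.sqrt ((u+p)*(v+q)) := Real.sqrt_le_sqrt hsq

lemma key_ineq (a u v b1 c1 b2 c2 : ℝ) (ha : 0 < a) (hu : 0 ≤ u) (hv : 0 ≤ v)
    (hb1 : 0 ≤ b1) (hc1 : 0 ≤ c1) (hb2 : 0 ≤ b2) (hc2 : 0 ≤ c2) :
    Real.sqrt (u*v) + Real.sqrt (c1*b1) * Real.sqrt (b2*c2) / a
      ≤ Real.sqrt ((u + c1*b2/a) * (v + c2*b1/a)) := by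
  have h0 := sqrt_add_le u v (c1*b2/a) (c2*b1/a) hu hv (by positivity) (by positivity)
  have h1 : Real.sqrt ((c1*b2/a) * (c2*b1/a)) = Real.sqrt (c1*b1) * Real.sqrt (b2*c2) / a := by
    rw [show (c1*b2/a) * (c2*b1/a) = ((c1*b1) * (b2*c2)) / a^2 by ring]
    rw [Real.sqrt_div (by positivity), Real.sqrt_sq ha.le,
      Real.sqrt_mul (by positivity)]
  rw [h1] at h0
  exact h0

lemma det_schur {m : ℕ} (A : Matrix (Fin (m+1)) (Fin (m+1)) ℝ) (ha : A 0 0 ≠ 0) :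
    A.det = A 0 0 *
      (Matrix.of fun i j : Fin m => A i.succ j.succ - A i.succ 0 * A 0 j.succ / A 0 0).det := by
  set c : Fin (m+1) → ℝ := fun i => if i = 0 then 0 else -(A i 0 / A 0 0) with hc
  set A' : Matrix (Fin (m+1)) (Fin (m+1)) ℝ := Matrix.of fun i j => A i j + c i * A 0 j with hA'
  have h1 : A'.det = A.det :=
    Matrix.det_eq_of_forall_row_eq_smul_add_const c 0 (by simp [hc]) (fun i j => rfl)
  have h20 : A' 0 0 = A 0 0 := by simp [hA', hc]
  have hcol : ∀ i : Fin (m+1), i ≠ 0 → A' i 0 = 0 := by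
    intro i hi
    simp only [hA', hc, Matrix.of_apply, if_neg hi]
    field_simp
    ring
  have h2 : A'.det = A 0 0 * (A'.submatrix Fin.succ Fin.succ).det := by
    rw [Matrix.det_succ_column_zero]
    rw [Finset.sum_eq_single_of_mem 0 (Finset.mem_univ _)]
    · simp [h20, Fin.succAbove_zero]
    · intro b _ hb
      rw [hcol b hb]
      ring
  have h3 : A'.submatrix Fin.succ Fin.succ
      = Matrix.of fun i j : Fin m => A i.succ j.succ - A i.succ 0 * A 0 j.succ / A 0 0 := by
    ext i j
    simp only [Matrix.submatrix_apply, hA', Matrix.of_apply, hc, if_neg (Fin.succ_ne_zero i)]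
    ring
  rw [← h1, h2, h3]

lemma det_le_det_asym : ∀ (m : ℕ) (A : Matrix (Fin m) (Fin m) ℝ),
    IsNonsingMMatrix A → A.det ≤ (Asym A).det := by
  intro m
  induction m with
  | zero =>
    intro A _
    simp [Matrix.det_fin_zero]
  | succ k ih =>
    intro A hA
    obtain ⟨x, hgx, hAx1⟩ := m_good hA
    have hoff := hA.1
    have ha : 0 < A 0 0 := good_diag_pos hgx 0
    set S : Matrix (Fin k) (Fin k) ℝ :=
      Matrix.of fun i j => A i.succ j.succ - A i.succ 0 * A 0 j.succ / A 0 0 with hSdef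
    set T : Matrix (Fin k) (Fin k) ℝ :=
      Matrix.of fun i j =>
        (Asym A) i.succ j.succ - (Asym A) i.succ 0 * (Asym A) 0 j.succ / (Asym A) 0 0 with hTdef
    have hAsym00 : (Asym A) 0 0 = A 0 0 := asym_diag A 0
    -- determinant factorizations
    have h1 : A.det = A 0 0 * S.det := det_schur A (ne_of_gt ha)
    have h2 : (Asym A).det = A 0 0 * T.det := by
      have := det_schur (Asym A) (by rw [hAsym00]; exact ne_of_gt ha)
      rw [hAsym00] at this
      exact this
    -- S is a nonsingular M-matrix via the tail of x
    have hgS : Good S (fun i => x i.succ) := by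
      refine ⟨?_, fun i => hgx.2.1 i.succ, ?_⟩
      · intro i j hij
        have hsucc : (i.succ : Fin (k+1)) ≠ j.succ := fun hcon => hij (Fin.succ_injective _ hcon)
        have e1 : A i.succ j.succ ≤ 0 := hoff _ _ hsucc
        have e2 : 0 ≤ A i.succ 0 * A 0 j.succ := by
          have := hoff i.succ 0 (Fin.succ_ne_zero i)
          have := hoff 0 j.succ (Ne.symm (Fin.succ_ne_zero j))
          nlinarith
        have := div_nonneg e2 ha.le
        simp only [hSdef, Matrix.of_apply]
        linarith
      · intro i
        have hx0 : (A *ᵥ x) i.succ = 1 := by rw [hAx1]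
        have hx00 : (A *ᵥ x) 0 = 1 := by rw [hAx1]
        rw [Matrix.mulVec, dotProduct, Fin.sum_univ_succ] at hx0 hx00
        have hmv : (S *ᵥ fun i => x i.succ) i
            = (∑ j : Fin k, A i.succ j.succ * x j.succ)
              - A i.succ 0 / A 0 0 * ∑ j : Fin k, A 0 j.succ * x j.succ := by
          rw [Matrix.mulVec, dotProduct, Finset.mul_sum, ← Finset.sum_sub_distrib]
          apply Finset.sum_congr rfl
          intro j _
          simp only [hSdef, Matrix.of_apply]
          ring
        rw [hmv]
        have e1 : ∑ j : Fin k, A i.succ j.succ * x j.succ = 1 - A i.succ 0 * x 0 := by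
          linarith
        have e2 : ∑ j : Fin k, A 0 j.succ * x j.succ = 1 - A 0 0 * x 0 := by
          linarith
        rw [e1, e2]
        have e3 : (1 - A i.succ 0 * x 0) - A i.succ 0 / A 0 0 * (1 - A 0 0 * x 0)
            = 1 - A i.succ 0 / A 0 0 := by
          field_simp
          ring
        rw [e3]
        have e4 : A i.succ 0 / A 0 0 ≤ 0 :=
          div_nonpos_of_nonpos_of_nonneg (hoff i.succ 0 (Fin.succ_ne_zero i)) ha.le
        linarith
    have hSM : IsNonsingMMatrix S := (good_isNonsingM hgS).1
    -- T is a Z-matrix and dominates Asym S entrywise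
    have hTentry : ∀ i j : Fin k, i ≠ j →
        T i j = -Real.sqrt ((-A i.succ j.succ) * (-A j.succ i.succ))
          - Real.sqrt ((-A i.succ 0) * (-A 0 i.succ))
            * Real.sqrt ((-A 0 j.succ) * (-A j.succ 0)) / A 0 0 := by
      intro i j hij
      have hsucc : (i.succ : Fin (k+1)) ≠ j.succ := fun hcon => hij (Fin.succ_injective _ hcon)
      have e0 : T i j = Asym A i.succ j.succ - Asym A i.succ 0 * Asym A 0 j.succ / Asym A 0 0 :=
        rfl
      rw [e0, hAsym00, asym_off A hsucc, asym_off A (Fin.succ_ne_zero i),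
        asym_off A (Ne.symm (Fin.succ_ne_zero j)), neg_mul_neg]
      rw [show A i.succ j.succ * A j.succ i.succ
          = (-A i.succ j.succ) * (-A j.succ i.succ) by ring,
        show A i.succ 0 * A 0 i.succ = (-A i.succ 0) * (-A 0 i.succ) by ring,
        show A 0 j.succ * A j.succ 0 = (-A 0 j.succ) * (-A j.succ 0) by ring]
    have hTz : ∀ i j : Fin k, i ≠ j → T i j ≤ 0 := by
      intro i j hij
      rw [hTentry i j hij]
      have s1 := Real.sqrt_nonneg ((-A i.succ j.succ) * (-A j.succ i.succ))
      have s2 := Real.sqrt_nonneg ((-A i.succ 0) * (-A 0 i.succ))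
      have s3 := Real.sqrt_nonneg ((-A 0 j.succ) * (-A j.succ 0))
      have := div_nonneg (mul_nonneg s2 s3) ha.le
      linarith
    have hST : ∀ i j : Fin k, (Asym S) i j ≤ T i j := by
      intro i j
      by_cases hij : i = j
      · subst hij
        have hX : 0 ≤ A i.succ 0 * A 0 i.succ := by
          have := hoff i.succ 0 (Fin.succ_ne_zero i)
          have := hoff 0 i.succ (Ne.symm (Fin.succ_ne_zero i))
          nlinarith
        have hdiagT : T i i = A i.succ i.succ - (A i.succ 0 * A 0 i.succ) / A 0 0 := by
          have e0 : T i i = Asym A i.succ i.succ - Asym A i.succ 0 * Asym A 0 i.succ / Asym A 0 0 :=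
            rfl
          rw [e0, hAsym00, asym_diag, asym_off A (Fin.succ_ne_zero i),
            asym_off A (Ne.symm (Fin.succ_ne_zero i)), neg_mul_neg,
            show A 0 i.succ * A i.succ 0 = A i.succ 0 * A 0 i.succ from mul_comm _ _,
            Real.mul_self_sqrt hX]
        have hdiagS : (Asym S) i i = A i.succ i.succ - (A i.succ 0 * A 0 i.succ) / A 0 0 := by
          rw [asym_diag]
          rfl
        rw [hdiagT, hdiagS]
      · have hsucc : (i.succ : Fin (k+1)) ≠ j.succ := fun hcon => hij (Fin.succ_injective _ hcon)
        have hu : (0:ℝ) ≤ -A i.succ j.succ := neg_nonneg.2 (hoff _ _ hsucc)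
        have hv : (0:ℝ) ≤ -A j.succ i.succ :=
          neg_nonneg.2 (hoff _ _ (Ne.symm hsucc))
        have hc1 : (0:ℝ) ≤ -A i.succ 0 := neg_nonneg.2 (hoff _ _ (Fin.succ_ne_zero i))
        have hb1 : (0:ℝ) ≤ -A 0 i.succ := neg_nonneg.2 (hoff _ _ (Ne.symm (Fin.succ_ne_zero i)))
        have hc2 : (0:ℝ) ≤ -A j.succ 0 := neg_nonneg.2 (hoff _ _ (Fin.succ_ne_zero j))
        have hb2 : (0:ℝ) ≤ -A 0 j.succ := neg_nonneg.2 (hoff _ _ (Ne.symm (Fin.succ_ne_zero j)))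
        have hkey := key_ineq (A 0 0) (-A i.succ j.succ) (-A j.succ i.succ)
          (-A 0 i.succ) (-A i.succ 0) (-A 0 j.succ) (-A j.succ 0)
          ha hu hv hb1 hc1 hb2 hc2
        have hSij : (Asym S) i j = -Real.sqrt
            (((-A i.succ j.succ) + (-A i.succ 0) * (-A 0 j.succ) / A 0 0)
              * ((-A j.succ i.succ) + (-A j.succ 0) * (-A 0 i.succ) / A 0 0)) := by
          rw [asym_off S hij]
          congr 1
          congr 1
          show (A i.succ j.succ - A i.succ 0 * A 0 j.succ / A 0 0)
              * (A j.succ i.succ - A j.succ 0 * A 0 i.succ / A 0 0) = _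
          ring
        rw [hSij, hTentry i j hij]
        linarith
    -- induction and monotonicity
    obtain ⟨z, hgz⟩ := asym_good hSM
    have h3 : S.det ≤ (Asym S).det := ih S hSM
    have h4 : (Asym S).det ≤ T.det := det_mono hgz hTz hST
    rw [h1, h2]
    have := mul_le_mul_of_nonneg_left (h3.trans h4) ha.le
    linarith

end Stmt15Aux
end

/-- Lemma 3.3. For a nonsingular M-matrix `A`, the matrices
`A_sym = D_A - S(B)` and `Ā_sym = D_A⁻¹ A_sym` are nonsingular M-matrices, and
`det(A_sym) ≥ det(A)`, `det(Ā_sym) ≥ det(Ā)`. -/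
theorem statement15 {n : ℕ} (A : Matrix (Fin n) (Fin n) ℝ) (hA : IsNonsingMMatrix A) :
    IsNonsingMMatrix (Asym A) ∧ IsNonsingMMatrix (Abar (Asym A)) ∧
      A.det ≤ (Asym A).det ∧ (Abar A).det ≤ (Abar (Asym A)).det := by
  obtain ⟨z, hgz⟩ := Stmt15Aux.asym_good hA
  obtain ⟨x, hgx, -⟩ := Stmt15Aux.m_good hA
  have hdiag : ∀ i, 0 < A i i := fun i => Stmt15Aux.good_diag_pos hgx i
  have hAsymM := (Stmt15Aux.good_isNonsingM hgz).1
  have hgbar := Stmt15Aux.good_abar hgz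
  have hAbarM := (Stmt15Aux.good_isNonsingM hgbar).1
  have hdet1 : A.det ≤ (Asym A).det := Stmt15Aux.det_le_det_asym n A hA
  refine ⟨hAsymM, hAbarM, hdet1, ?_⟩
  rw [Stmt15Aux.det_abar, Stmt15Aux.det_abar]
  have hprodeq : (∏ i, ((Asym A) i i)⁻¹) = ∏ i, (A i i)⁻¹ := by
    apply Finset.prod_congr rfl
    intro i _
    rw [Stmt15Aux.asym_diag]
  rw [hprodeq]
  exact mul_le_mul_of_nonneg_left hdet1
    (Finset.prod_nonneg fun i _ => inv_nonneg.2 (hdiag i).le)
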